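/- Let (B,W) be a coloring of the plane, and let a, b, c > 0 be reals satisfying the (possibly degenerate) triangle inequality. If the coloring contains an (a,a,a)-triangle, then it contains an (a,b,c)-triangle. -/

import Mathlib

/-- A set of three points is monochromatic for the coloring `(B, Bᶜ)`:
all three points are black (in `B`) or all three are white (in `Bᶜ`). -/
def Mono (B : Set (EuclideanSpace ℝ (Fin 2))) (X Y Z : EuclideanSpace ℝ (Fin 2)) : Prop :=
  (X ∈ B ∧ Y ∈ B ∧ Z ∈ B) ∨ (X ∉ B ∧ Y ∉ B ∧ Z ∉ B)

/-- The coloring `(B, Bᶜ)` contains an `(a,b,c)`-triangle. -/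
def ContainsTriangle (B : Set (EuclideanSpace ℝ (Fin 2))) (a b c : ℝ) : Prop :=
  ∃ X Y Z : EuclideanSpace ℝ (Fin 2),
    Mono B X Y Z ∧ dist X Y = a ∧ dist Y Z = b ∧ dist Z X = c

set_option maxHeartbeats 4000000

private lemma dist_formula (n1 n2 M1 m1 m2 M2 r : ℝ) (h1 : M1 ≠ 0) (h2 : M2 ≠ 0)
    (hr : 0 ≤ r)
    (key : (n1*M2 - m1*M1)^2 + (n2*M2 - m2*M1)^2 = r^2*(M1*M2)^2) :
    dist ((↑(n1/M1) : ℂ) + ↑(n2/M1)*Complex.I) ((↑(m1/M2) : ℂ) + ↑(m2/M2)*Complex.I) = r := by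
  rw [Complex.dist_eq]
  have hd : ((↑(n1/M1) : ℂ) + ↑(n2/M1)*Complex.I) - ((↑(m1/M2) : ℂ) + ↑(m2/M2)*Complex.I)
      = ↑(n1/M1 - m1/M2) + ↑(n2/M1 - m2/M2)*Complex.I := by push_cast; ring
  rw [hd, Complex.norm_add_mul_I]
  have h12 : (M1*M2) ≠ 0 := mul_ne_zero h1 h2
  have hmain : (n1/M1 - m1/M2)^2 + (n2/M1 - m2/M2)^2 = r^2 := by
    have e1 : n1/M1 - m1/M2 = (n1*M2 - m1*M1)/(M1*M2) := by field_simp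
    have e2 : n2/M1 - m2/M2 = (n2*M2 - m2*M1)/(M1*M2) := by field_simp
    rw [e1, e2, div_pow, div_pow, ← add_div, key, mul_div_assoc,
        div_self (pow_ne_zero 2 h12), mul_one]
  rw [hmain]
  exact Real.sqrt_sq hr

private lemma main_lemma (C : ℂ → Prop) (a b c : ℝ)
    (ha : 0 < a) (hb : 0 < b) (hc : 0 < c)
    (h₁ : a ≤ b + c) (h₂ : b ≤ a + c) (h₃ : c ≤ a + b)
    (X Y Z : ℂ) (hX : C X) (hY : C Y) (hZ : C Z)
    (dXY : dist X Y = a) (dYZ : dist Y Z = a) (dZX : dist Z X = a)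
    (hcon : ∀ P Q R : ℂ, ((C P ∧ C Q ∧ C R) ∨ (¬C P ∧ ¬C Q ∧ ¬C R)) →
       dist P Q = a → dist Q R = b → dist R P = c → False) : False := by
  have ha' : a ≠ 0 := ne_of_gt ha
  have h2a0 : (2*a) ≠ 0 := by positivity
  have haC : (a:ℂ) ≠ 0 := Complex.ofReal_ne_zero.mpr ha'
  set v : ℂ := (Y - X)/(a:ℂ) with hv
  have hvabs : ‖v‖ = 1 := by
    rw [hv, norm_div]
    have hyx : ‖Y - X‖ = a := by
      rw [← Complex.dist_eq, dist_comm]; exact dXY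
    rw [hyx, Complex.norm_real, Real.norm_eq_abs, abs_of_pos ha, div_self ha']
  have hv0 : v ≠ 0 := by
    intro h; rw [h] at hvabs; simp at hvabs
  set F : ℂ → ℂ := fun p => X + v * p with hF
  have hFdist : ∀ p q : ℂ, dist (F p) (F q) = dist p q := by
    intro p q
    simp only [hF, Complex.dist_eq]
    have hdd : X + v*p - (X + v*q) = v*(p - q) := by ring
    rw [hdd, norm_mul, hvabs, one_mul]
  have hF0 : F 0 = X := by simp [hF]
  have hFa : F (a:ℂ) = Y := by
    simp only [hF, hv]
    rw [div_mul_cancel₀ _ haC]; ring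
  set ζ : ℂ := (Z - X)/v with hζdef
  have hFζ : F ζ = Z := by
    simp only [hF, hζdef]
    rw [mul_div_cancel₀ _ hv0]; ring
  have dζ0 : dist ζ 0 = a := by rw [← hFdist, hF0, hFζ]; exact dZX
  have dζa : dist ζ (a:ℂ) = a := by rw [← hFdist, hFa, hFζ, dist_comm]; exact dYZ
  set s : ℝ := ζ.im with hsdef
  have e1 : ζ.re^2 + s^2 = a^2 := by
    have h1 : ‖ζ - 0‖ = a := by rw [← Complex.dist_eq]; exact dζ0
    rw [sub_zero] at h1
    have h2 : Complex.normSq ζ = a^2 := by rw [← Complex.sq_norm, h1]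
    rw [Complex.normSq_apply] at h2
    rw [hsdef]
    linear_combination h2
  have e2 : (ζ.re - a)^2 + s^2 = a^2 := by
    have h1 : ‖ζ - (a:ℂ)‖ = a := by rw [← Complex.dist_eq]; exact dζa
    have h2 : Complex.normSq (ζ - (a:ℂ)) = a^2 := by rw [← Complex.sq_norm, h1]
    rw [Complex.normSq_apply, Complex.sub_re, Complex.sub_im,
        Complex.ofReal_re, Complex.ofReal_im] at h2
    rw [hsdef]
    linear_combination h2
  have hre : ζ.re = a/2 := mul_left_cancel₀ h2a0 (by linear_combination e1 - e2)
  have hs : 4*s^2 = 3*a^2 := by linear_combination 4*e1 - (4*ζ.re + 2*a)*hre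
  obtain ⟨x, hx⟩ : ∃ x : ℝ, 2*a*x = a^2 + c^2 - b^2 :=
    ⟨(a^2 + c^2 - b^2)/(2*a), by field_simp⟩
  have hprod : 0 ≤ (a+b+c)*((a+c-b)*((a+b-c)*(b+c-a))) := by
    apply mul_nonneg (by linarith)
    apply mul_nonneg (by linarith)
    exact mul_nonneg (by linarith) (by linarith)
  have h4ac : (a^2+c^2-b^2)^2 ≤ (2*a*c)^2 := by nlinarith [hprod]
  have hx2 : 4*a^2*x^2 = (a^2+c^2-b^2)^2 := by
    linear_combination (2*a*x + (a^2+c^2-b^2))*hx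
  have hc2x : 0 ≤ c^2 - x^2 := by nlinarith [hx2, h4ac, mul_pos ha ha, sq_nonneg a]
  obtain ⟨y, hy⟩ : ∃ y : ℝ, y^2 = c^2 - x^2 := ⟨Real.sqrt (c^2 - x^2), Real.sq_sqrt hc2x⟩
  set A0c : ℂ := (↑(((0 : ℝ))/((1 : ℝ))) : ℂ) + ↑(((0 : ℝ))/((1 : ℝ)))*Complex.I with hA0c
  set A1c : ℂ := (↑(((1 : ℝ)*a)/((1 : ℝ))) : ℂ) + ↑(((0 : ℝ))/((1 : ℝ)))*Complex.I with hA1c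
  set A2c : ℂ := (↑(((1 : ℝ)*a)/((2 : ℝ))) : ℂ) + ↑(((2 : ℝ)*s)/((2 : ℝ)))*Complex.I with hA2c
  set P3c : ℂ := (↑(((1 : ℝ)*x)/((1 : ℝ))) : ℂ) + ↑(((1 : ℝ)*y)/((1 : ℝ)))*Complex.I with hP3c
  set P10c : ℂ := (↑(((2 : ℝ)*y*s + (-1 : ℝ)*a*x + (1 : ℝ)*a^2)/((2 : ℝ)*a)) : ℂ) + ↑(((-2 : ℝ)*x*s + (2 : ℝ)*a*s + (-1 : ℝ)*a*y)/((2 : ℝ)*a))*Complex.I with hP10c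
  set P14c : ℂ := (↑(((2 : ℝ)*y*s + (1 : ℝ)*a*x + (1 : ℝ)*a^2)/((2 : ℝ)*a)) : ℂ) + ↑(((-2 : ℝ)*x*s + (2 : ℝ)*a*s + (1 : ℝ)*a*y)/((2 : ℝ)*a))*Complex.I with hP14c
  set P22c : ℂ := (↑(((2 : ℝ)*c^2*y*s + (2 : ℝ)*b^2*y*s + (-4 : ℝ)*a*x*y*s + (-1 : ℝ)*a*c^2*x + (3 : ℝ)*a*b^2*x + (2 : ℝ)*a^2*y*s + (-2 : ℝ)*a^2*y^2 + (1 : ℝ)*a^2*c^2 + (1 : ℝ)*a^2*b^2 + (1 : ℝ)*a^3*x + (-1 : ℝ)*a^4)/((4 : ℝ)*a*b^2)) : ℂ) + ↑(((-2 : ℝ)*c^2*x*s + (-2 : ℝ)*b^2*x*s + (-4 : ℝ)*a*y^2*s + (2 : ℝ)*a*c^2*s + (-1 : ℝ)*a*c^2*y + (2 : ℝ)*a*b^2*s + (3 : ℝ)*a*b^2*y + (2 : ℝ)*a^2*x*s + (2 : ℝ)*a^2*x*y + (-2 : ℝ)*a^3*s + (-1 : ℝ)*a^3*y)/((4 : ℝ)*a*b^2))*Complex.I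 with hP22c
  set P59c : ℂ := (↑(((4 : ℝ)*c^2*y*s + (2 : ℝ)*a*b^2*x + (-4 : ℝ)*a^2*y^2 + (2 : ℝ)*a^2*c^2 + (-2 : ℝ)*a^3*x)/((4 : ℝ)*a*c^2)) : ℂ) + ↑(((-4 : ℝ)*c^2*x*s + (4 : ℝ)*a*c^2*s + (2 : ℝ)*a*b^2*y + (4 : ℝ)*a^2*x*y + (-2 : ℝ)*a^3*y)/((4 : ℝ)*a*c^2))*Complex.I with hP59c
  have hA0z : A0c = 0 := by rw [hA0c]; norm_num
  have hA1a : A1c = (a:ℂ) := by rw [hA1c]; norm_num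
  have hA2ζ : A2c = ζ := by
    rw [hA2c]
    symm
    apply Complex.ext
    · simp only [Complex.add_re, Complex.ofReal_re, Complex.mul_re, Complex.I_re,
        Complex.I_im, Complex.ofReal_im, mul_zero, mul_one, zero_sub, sub_zero]
      rw [hre]; ring
    · simp only [Complex.add_im, Complex.ofReal_im, Complex.mul_im, Complex.I_re,
        Complex.I_im, Complex.ofReal_re, mul_zero, mul_one, zero_add, add_zero]
      rw [← hsdef]; ring
  have k0 : dist A0c A1c = a := by
    rw [hA0c, hA1c]
    refine dist_formula _ _ _ _ _ _ _ ?_ ?_ ha.le ?_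
    · positivity
    · positivity
    · linear_combination ((0 : ℝ)) * hy + ((0 : ℝ)) * hs + ((0 : ℝ)) * hx
  have k16 : dist A2c A0c = a := by
    rw [hA2c, hA0c]
    refine dist_formula _ _ _ _ _ _ _ ?_ ?_ ha.le ?_
    · positivity
    · positivity
    · linear_combination ((0 : ℝ)) * hy + ((1 : ℝ)) * hs + ((0 : ℝ)) * hx
  have k17 : dist A2c A1c = a := by
    rw [hA2c, hA1c]
    refine dist_formula _ _ _ _ _ _ _ ?_ ?_ ha.le ?_
    · positivity
    · positivity
    · linear_combination ((0 : ℝ)) * hy + ((1 : ℝ)) * hs + ((0 : ℝ)) * hx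
  have k1 : dist P3c A0c = c := by
    rw [hP3c, hA0c]
    refine dist_formula _ _ _ _ _ _ _ ?_ ?_ hc.le ?_
    · positivity
    · positivity
    · linear_combination ((1 : ℝ)) * hy + ((0 : ℝ)) * hs + ((0 : ℝ)) * hx
  have k2 : dist P3c A1c = b := by
    rw [hP3c, hA1c]
    refine dist_formula _ _ _ _ _ _ _ ?_ ?_ hb.le ?_
    · positivity
    · positivity
    · exact mul_left_cancel₀ (pow_ne_zero 1 h2a0) (by
        linear_combination ((2 : ℝ)*a) * hy + ((0 : ℝ)) * hs + ((-2 : ℝ)*a) * hx)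
  have k3 : dist P10c A0c = b := by
    rw [hP10c, hA0c]
    refine dist_formula _ _ _ _ _ _ _ ?_ ?_ hb.le ?_
    · positivity
    · positivity
    · exact mul_left_cancel₀ (pow_ne_zero 1 h2a0) (by
        linear_combination ((8 : ℝ)*a*s^2 + (2 : ℝ)*a^3) * hy + ((2 : ℝ)*a*c^2 + (-4 : ℝ)*a^2*x + (2 : ℝ)*a^3) * hs + ((-8 : ℝ)*a^3) * hx)
  have k4 : dist P10c A2c = c := by
    rw [hP10c, hA2c]
    refine dist_formula _ _ _ _ _ _ _ ?_ ?_ hc.le ?_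
    · positivity
    · positivity
    · linear_combination ((16 : ℝ)*s^2 + (4 : ℝ)*a^2) * hy + ((4 : ℝ)*c^2) * hs + ((0 : ℝ)) * hx
  have k5 : dist P14c A1c = b := by
    rw [hP14c, hA1c]
    refine dist_formula _ _ _ _ _ _ _ ?_ ?_ hb.le ?_
    · positivity
    · positivity
    · exact mul_left_cancel₀ (pow_ne_zero 1 h2a0) (by
        linear_combination ((8 : ℝ)*a*s^2 + (2 : ℝ)*a^3) * hy + ((2 : ℝ)*a*c^2 + (-4 : ℝ)*a^2*x + (2 : ℝ)*a^3) * hs + ((-8 : ℝ)*a^3) * hx)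
  have k6 : dist P14c A2c = c := by
    rw [hP14c, hA2c]
    refine dist_formula _ _ _ _ _ _ _ ?_ ?_ hc.le ?_
    · positivity
    · positivity
    · linear_combination ((16 : ℝ)*s^2 + (4 : ℝ)*a^2) * hy + ((4 : ℝ)*c^2) * hs + ((0 : ℝ)) * hx
  have k7 : dist P22c P14c = a := by
    rw [hP22c, hP14c]
    refine dist_formula _ _ _ _ _ _ _ ?_ ?_ ha.le ?_
    · positivity
    · positivity
    · exact mul_left_cancel₀ (pow_ne_zero 3 h2a0) (by
        linear_combination ((128 : ℝ)*a^5*c^4*s^2 + (-256 : ℝ)*a^5*b^2*c^2*s^2 + (128 : ℝ)*a^5*b^4*s^2 + (512 : ℝ)*a^7*y^2*s^2 + (256 : ℝ)*a^7*c^2*s^2 + (32 : ℝ)*a^7*c^4 + (256 : ℝ)*a^7*b^2*s^2 + (-64 : ℝ)*a^7*b^2*c^2 + (32 : ℝ)*a^7*b^4 + (-1024 : ℝ)*a^8*x*s^2 + (640 : ℝ)*a^9*s^2 + (128 : ℝ)*a^9*y^2 + (64 : ℝ)*a^9*c^2 + (64 : ℝ)*a^9*b^2 + (-256 : ℝ)*a^10*x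 + (160 : ℝ)*a^11) * hy + ((32 : ℝ)*a^5*c^6 + (-64 : ℝ)*a^5*b^2*c^4 + (32 : ℝ)*a^5*b^4*c^2 + (-64 : ℝ)*a^6*c^4*x + (128 : ℝ)*a^6*b^2*c^2*x + (-64 : ℝ)*a^6*b^4*x + (-128 : ℝ)*a^7*c^2*x^2 + (96 : ℝ)*a^7*c^4 + (32 : ℝ)*a^7*b^4 + (256 : ℝ)*a^8*x^3 + (-128 : ℝ)*a^8*c^2*x + (-128 : ℝ)*a^8*b^2*x + (-128 : ℝ)*a^9*x^2 + (96 : ℝ)*a^9*c^2 + (64 : ℝ)*a^9*b^2 + (-64 : ℝ)*a^10*x + (32 : ℝ)*a^11) * hs + ((-128 : ℝ)*a^7*c^4 + (128 : ℝ)*a^7*b^2*c^2 + (-256 : ℝ)*a^8*b^2*x + (512 : ℝ)*a^9*x^2 + (-256 : ℝ)*a^9*c^2 + (-384 : ℝ)*a^9*b^2 + (-128 : ℝ)*a^11) * hx)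
  have k8 : dist P14c P3c = b := by
    rw [hP14c, hP3c]
    refine dist_formula _ _ _ _ _ _ _ ?_ ?_ hb.le ?_
    · positivity
    · positivity
    · exact mul_left_cancel₀ (pow_ne_zero 1 h2a0) (by
        linear_combination ((8 : ℝ)*a*s^2 + (2 : ℝ)*a^3) * hy + ((2 : ℝ)*a*c^2 + (-4 : ℝ)*a^2*x + (2 : ℝ)*a^3) * hs + ((-8 : ℝ)*a^3) * hx)
  have k9 : dist P22c P3c = c := by
    rw [hP22c, hP3c]
    refine dist_formula _ _ _ _ _ _ _ ?_ ?_ hc.le ?_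
    · positivity
    · positivity
    · exact mul_left_cancel₀ (pow_ne_zero 3 h2a0) (by
        linear_combination ((32 : ℝ)*a^3*c^4*s^2 + (64 : ℝ)*a^3*b^2*c^2*s^2 + (32 : ℝ)*a^3*b^4*s^2 + (128 : ℝ)*a^5*y^2*s^2 + (64 : ℝ)*a^5*c^2*s^2 + (8 : ℝ)*a^5*c^4 + (-64 : ℝ)*a^5*b^2*s^2 + (16 : ℝ)*a^5*b^2*c^2 + (8 : ℝ)*a^5*b^4 + (-256 : ℝ)*a^6*x*s^2 + (160 : ℝ)*a^7*s^2 + (32 : ℝ)*a^7*y^2 + (16 : ℝ)*a^7*c^2 + (-16 : ℝ)*a^7*b^2 + (-64 : ℝ)*a^8*x + (40 : ℝ)*a^9) * hy + ((8 : ℝ)*a^3*c^6 + (16 : ℝ)*a^3*b^2*c^4 + (8 : ℝ)*a^3*b^4*c^2 + (-16 : ℝ)*a^4*c^4*x + (-32 : ℝ)*a^4*b^2*c^2*x + (-16 : ℝ)*a^4*b^4*x + (-32 : ℝ)*a^5*c^2*x^2 + (24 : ℝ)*a^5*c^4 + (8 : ℝ)*a^5*b^4 + (64 : ℝ)*a^6*x^3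 + (-32 : ℝ)*a^6*c^2*x + (32 : ℝ)*a^6*b^2*x + (-32 : ℝ)*a^7*x^2 + (24 : ℝ)*a^7*c^2 + (-16 : ℝ)*a^7*b^2 + (-16 : ℝ)*a^8*x + (8 : ℝ)*a^9) * hs + ((-32 : ℝ)*a^5*c^4 + (-96 : ℝ)*a^5*b^2*c^2 + (-64 : ℝ)*a^6*b^2*x + (128 : ℝ)*a^7*x^2 + (-64 : ℝ)*a^7*c^2 + (32 : ℝ)*a^7*b^2 + (-32 : ℝ)*a^9) * hx)
  have k10 : dist P59c P14c = a := by
    rw [hP59c, hP14c]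
    refine dist_formula _ _ _ _ _ _ _ ?_ ?_ ha.le ?_
    · positivity
    · positivity
    · exact mul_left_cancel₀ (pow_ne_zero 2 h2a0) (by
        linear_combination ((64 : ℝ)*a^6*c^4 + (-128 : ℝ)*a^6*b^2*c^2 + (64 : ℝ)*a^6*b^4 + (256 : ℝ)*a^8*y^2 + (384 : ℝ)*a^8*c^2 + (-128 : ℝ)*a^8*b^2 + (64 : ℝ)*a^10) * hy + ((0 : ℝ)) * hs + ((-64 : ℝ)*a^6*c^4 + (64 : ℝ)*a^6*b^2*c^2 + (-128 : ℝ)*a^7*c^2*x + (-64 : ℝ)*a^8*c^2) * hx)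
  have k11 : dist P59c P10c = b := by
    rw [hP59c, hP10c]
    refine dist_formula _ _ _ _ _ _ _ ?_ ?_ hb.le ?_
    · positivity
    · positivity
    · exact mul_left_cancel₀ (pow_ne_zero 2 h2a0) (by
        linear_combination ((64 : ℝ)*a^6*c^4 + (128 : ℝ)*a^6*b^2*c^2 + (64 : ℝ)*a^6*b^4 + (256 : ℝ)*a^8*y^2 + (128 : ℝ)*a^8*c^2 + (-128 : ℝ)*a^8*b^2 + (64 : ℝ)*a^10) * hy + ((0 : ℝ)) * hs + ((-64 : ℝ)*a^6*c^4 + (64 : ℝ)*a^6*b^2*c^2 + (-128 : ℝ)*a^7*c^2*x + (-64 : ℝ)*a^8*c^2) * hx)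
  have k12 : dist P10c P14c = c := by
    rw [hP10c, hP14c]
    refine dist_formula _ _ _ _ _ _ _ ?_ ?_ hc.le ?_
    · positivity
    · positivity
    · linear_combination ((16 : ℝ)*a^4) * hy + ((0 : ℝ)) * hs + ((0 : ℝ)) * hx
  have k13 : dist P22c P59c = a := by
    rw [hP22c, hP59c]
    refine dist_formula _ _ _ _ _ _ _ ?_ ?_ ha.le ?_
    · positivity
    · positivity
    · exact mul_left_cancel₀ (pow_ne_zero 3 h2a0) (by
        linear_combination ((512 : ℝ)*a^5*c^8*s^2 + (-1024 : ℝ)*a^5*b^2*c^6*s^2 + (512 : ℝ)*a^5*b^4*c^4*s^2 + (2048 : ℝ)*a^7*c^4*y^2*s^2 + (1024 : ℝ)*a^7*c^6*s^2 + (128 : ℝ)*a^7*c^8 + (1024 : ℝ)*a^7*b^2*c^4*s^2 + (-768 : ℝ)*a^7*b^2*c^6 + (1664 : ℝ)*a^7*b^4*c^4 + (-1536 : ℝ)*a^7*b^6*c^2 + (512 : ℝ)*a^7*b^8 + (-4096 : ℝ)*a^8*c^4*x*s^2 + (2560 : ℝ)*a^9*c^4*s^2 + (512 : ℝ)*a^9*c^4*y^2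 + (256 : ℝ)*a^9*c^6 + (-2048 : ℝ)*a^9*b^2*c^2*y^2 + (-1792 : ℝ)*a^9*b^2*c^4 + (2048 : ℝ)*a^9*b^4*y^2 + (3072 : ℝ)*a^9*b^4*c^2 + (-1024 : ℝ)*a^9*b^6 + (-1024 : ℝ)*a^10*c^4*x + (2048 : ℝ)*a^10*b^2*c^2*x + (640 : ℝ)*a^11*c^4 + (-1536 : ℝ)*a^11*b^2*c^2 + (512 : ℝ)*a^11*b^4) * hy + ((128 : ℝ)*a^5*c^10 + (-256 : ℝ)*a^5*b^2*c^8 + (128 : ℝ)*a^5*b^4*c^6 + (-256 : ℝ)*a^6*c^8*x + (512 : ℝ)*a^6*b^2*c^6*x + (-256 : ℝ)*a^6*b^4*c^4*x + (-512 : ℝ)*a^7*c^6*x^2 + (384 : ℝ)*a^7*c^8 + (128 : ℝ)*a^7*b^4*c^4 + (1024 : ℝ)*a^8*c^4*x^3 + (-512 : ℝ)*a^8*c^6*x + (-512 : ℝ)*a^8*b^2*c^4*x + (-512 : ℝ)*a^9*c^4*x^2 + (384 : ℝ)*a^9*c^6 + (256 : ℝ)*a^9*b^2*c^4 + (-256 :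 ℝ)*a^10*c^4*x + (128 : ℝ)*a^11*c^4) * hs + ((-512 : ℝ)*a^7*c^8 + (-1024 : ℝ)*a^7*b^2*c^4*y*s + (1024 : ℝ)*a^7*b^2*c^6 + (1024 : ℝ)*a^7*b^4*c^2*y*s + (-1024 : ℝ)*a^7*b^4*c^4 + (512 : ℝ)*a^7*b^6*c^2 + (-2048 : ℝ)*a^8*b^2*c^2*x*y*s + (-512 : ℝ)*a^8*b^2*c^4*x + (-512 : ℝ)*a^8*b^4*c^2*x + (2048 : ℝ)*a^9*c^4*x^2 + (-1024 : ℝ)*a^9*c^6 + (1024 : ℝ)*a^9*b^2*c^2*y*s + (-1024 : ℝ)*a^9*b^2*c^2*x^2 + (-512 : ℝ)*a^9*b^4*c^2 + (512 : ℝ)*a^10*b^2*c^2*x + (-512 : ℝ)*a^11*c^4) * hx)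
  have k14 : dist P59c A0c = b := by
    rw [hP59c, hA0c]
    refine dist_formula _ _ _ _ _ _ _ ?_ ?_ hb.le ?_
    · positivity
    · positivity
    · exact mul_left_cancel₀ (pow_ne_zero 1 h2a0) (by
        linear_combination ((32 : ℝ)*a*c^4*s^2 + (-64 : ℝ)*a^3*c^2*y*s + (8 : ℝ)*a^3*b^4 + (32 : ℝ)*a^5*y^2 + (-16 : ℝ)*a^5*b^2 + (8 : ℝ)*a^7) * hy + ((8 : ℝ)*a*c^6 + (-16 : ℝ)*a^2*c^4*x + (8 : ℝ)*a^3*c^4) * hs + ((32 : ℝ)*a^3*c^2*y*s + (-24 : ℝ)*a^3*c^4 + (8 : ℝ)*a^3*b^2*c^2 + (-8 : ℝ)*a^5*c^2) * hx)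
  have k15 : dist P22c A0c = c := by
    rw [hP22c, hA0c]
    refine dist_formula _ _ _ _ _ _ _ ?_ ?_ hc.le ?_
    · positivity
    · positivity
    · exact mul_left_cancel₀ (pow_ne_zero 2 h2a0) (by
        linear_combination ((16 : ℝ)*a^2*c^4*s^2 + (32 : ℝ)*a^2*b^2*c^2*s^2 + (16 : ℝ)*a^2*b^4*s^2 + (64 : ℝ)*a^4*y^2*s^2 + (32 : ℝ)*a^4*c^2*s^2 + (4 : ℝ)*a^4*c^4 + (-32 : ℝ)*a^4*b^2*s^2 + (-128 : ℝ)*a^4*b^2*y*s + (-24 : ℝ)*a^4*b^2*c^2 + (36 : ℝ)*a^4*b^4 + (-128 : ℝ)*a^5*x*s^2 + (80 : ℝ)*a^6*s^2 + (16 : ℝ)*a^6*y^2 + (8 : ℝ)*a^6*c^2 + (-40 : ℝ)*a^6*b^2 + (-32 : ℝ)*a^7*x + (20 : ℝ)*a^8) * hy + ((4 : ℝ)*a^2*c^6 + (8 : ℝ)*a^2*b^2*c^4 + (4 : ℝ)*a^2*b^4*c^2 + (-8 : ℝ)*a^3*c^4*x + (-16 : ℝ)*a^3*b^2*c^2*x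 + (-8 : ℝ)*a^3*b^4*x + (-16 : ℝ)*a^4*c^2*x^2 + (12 : ℝ)*a^4*c^4 + (4 : ℝ)*a^4*b^4 + (32 : ℝ)*a^5*x^3 + (-16 : ℝ)*a^5*c^2*x + (16 : ℝ)*a^5*b^2*x + (-16 : ℝ)*a^6*x^2 + (12 : ℝ)*a^6*c^2 + (-8 : ℝ)*a^6*b^2 + (-8 : ℝ)*a^7*x + (4 : ℝ)*a^8) * hs + ((-16 : ℝ)*a^4*c^4 + (64 : ℝ)*a^4*b^2*y*s + (-16 : ℝ)*a^4*b^2*c^2 + (64 : ℝ)*a^6*x^2 + (-32 : ℝ)*a^6*c^2 + (16 : ℝ)*a^6*b^2 + (-16 : ℝ)*a^8) * hx)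
  have cA0 : C (F A0c) := by rw [hA0z, hF0]; exact hX
  have cA1 : C (F A1c) := by rw [hA1a, hFa]; exact hY
  have cA2 : C (F A2c) := by rw [hA2ζ, hFζ]; exact hZ
  have w3 : ¬ C (F P3c) := by
    intro hw
    exact hcon (F A0c) (F A1c) (F P3c) (Or.inl ⟨cA0, cA1, hw⟩)
      (by rw [hFdist]; exact k0)
      (by rw [hFdist, dist_comm]; exact k2)
      (by rw [hFdist]; exact k1)
  have w10 : ¬ C (F P10c) := by
    intro hw
    exact hcon (F A2c) (F A0c) (F P10c) (Or.inl ⟨cA2, cA0, hw⟩)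
      (by rw [hFdist]; exact k16)
      (by rw [hFdist, dist_comm]; exact k3)
      (by rw [hFdist]; exact k4)
  have w14 : ¬ C (F P14c) := by
    intro hw
    exact hcon (F A2c) (F A1c) (F P14c) (Or.inl ⟨cA2, cA1, hw⟩)
      (by rw [hFdist]; exact k17)
      (by rw [hFdist, dist_comm]; exact k5)
      (by rw [hFdist]; exact k6)
  have b22 : C (F P22c) := by
    by_contra hw
    exact hcon (F P22c) (F P14c) (F P3c) (Or.inr ⟨hw, w14, w3⟩)
      (by rw [hFdist]; exact k7)
      (by rw [hFdist]; exact k8)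
      (by rw [hFdist, dist_comm]; exact k9)
  have b59 : C (F P59c) := by
    by_contra hw
    exact hcon (F P14c) (F P59c) (F P10c) (Or.inr ⟨w14, hw, w10⟩)
      (by rw [hFdist, dist_comm]; exact k10)
      (by rw [hFdist]; exact k11)
      (by rw [hFdist]; exact k12)
  exact hcon (F P22c) (F P59c) (F A0c) (Or.inl ⟨b22, b59, cA0⟩)
    (by rw [hFdist]; exact k13)
    (by rw [hFdist]; exact k14)
    (by rw [hFdist, dist_comm]; exact k15)

theorem stmt0 (B : Set (EuclideanSpace ℝ (Fin 2))) (a b c : ℝ)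
    (ha : 0 < a) (hb : 0 < b) (hc : 0 < c)
    (h₁ : a ≤ b + c) (h₂ : b ≤ a + c) (h₃ : c ≤ a + b)
    (h : ContainsTriangle B a a a) : ContainsTriangle B a b c := by
  obtain ⟨X, Y, Z, hm, d1, d2, d3⟩ := h
  by_contra hno
  set e := Complex.orthonormalBasisOneI.repr with he
  have hX'd : dist (e.symm X) (e.symm Y) = a := by rw [e.symm.dist_map]; exact d1
  have hY'd : dist (e.symm Y) (e.symm Z) = a := by rw [e.symm.dist_map]; exact d2
  have hZ'd : dist (e.symm Z) (e.symm X) = a := by rw [e.symm.dist_map]; exact d3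
  cases hm with
  | inl hB =>
    refine main_lemma (fun z => e z ∈ B) a b c ha hb hc h₁ h₂ h₃
      (e.symm X) (e.symm Y) (e.symm Z) ?_ ?_ ?_ hX'd hY'd hZ'd ?_
    · simpa using hB.1
    · simpa using hB.2.1
    · simpa using hB.2.2
    · intro P Q R hm' d1' d2' d3'
      refine hno ⟨e P, e Q, e R, hm', ?_, ?_, ?_⟩
      · rw [e.dist_map]; exact d1'
      · rw [e.dist_map]; exact d2'
      · rw [e.dist_map]; exact d3'
  | inr hW =>
    refine main_lemma (fun z => e z ∉ B) a b c ha hb hc h₁ h₂ h₃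
      (e.symm X) (e.symm Y) (e.symm Z) ?_ ?_ ?_ hX'd hY'd hZ'd ?_
    · simpa using hW.1
    · simpa using hW.2.1
    · simpa using hW.2.2
    · intro P Q R hm' d1' d2' d3'
      have hm'' : Mono B (e P) (e Q) (e R) := by
        cases hm' with
        | inl hw => exact Or.inr hw
        | inr hb' => exact Or.inl ⟨not_not.mp hb'.1, not_not.mp hb'.2.1, not_not.mp hb'.2.2⟩
      refine hno ⟨e P, e Q, e R, hm'', ?_, ?_, ?_⟩
      · rw [e.dist_map]; exact d1'
      · rw [e.dist_map]; exact d2'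
      · rw [e.dist_map]; exact d3'
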